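/- For every convex g ∈ 𝒞̆, one has ∫₀¹ Tg ≤ 1/3. -/

import Mathlib

open Set MeasureTheory Filter intervalIntegral

noncomputable section

/-- The class ℰ of decreasing functions `f : [0,1] → [0,1]` with `f 0 = 1` and positive area. -/
def MemE (f : ℝ → ℝ) : Prop :=
  (∀ x ∈ Icc (0:ℝ) 1, f x ∈ Icc (0:ℝ) 1) ∧
  AntitoneOn f (Icc 0 1) ∧ f 0 = 1 ∧ 0 < ∫ x in (0:ℝ)..1, f x

/-- Pseudo-inverse: `f* y = sup {x ∈ [0,1] | f x ≥ y}`. -/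
def pseudoInv (f : ℝ → ℝ) (y : ℝ) : ℝ :=
  sSup {x | x ∈ Icc (0:ℝ) 1 ∧ y ≤ f x}

/-- The operator `T`: `(Tf)(x) = (∫ₓ¹ f*) / (∫₀¹ f)`. -/
def Tmap (f : ℝ → ℝ) : ℝ → ℝ :=
  fun x => (∫ y in x..1, pseudoInv f y) / ∫ t in (0:ℝ)..1, f t

/-- The operator `I`: `(Ig)(x) = (∫ₓ¹ g) / (∫₀¹ g)`. -/
def Imap (g : ℝ → ℝ) : ℝ → ℝ :=
  fun x => (∫ t in x..1, g t) / ∫ t in (0:ℝ)..1, g t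

/-- The class 𝒞: continuous members of ℰ vanishing at 1. -/
def MemC (f : ℝ → ℝ) : Prop := MemE f ∧ ContinuousOn f (Icc 0 1) ∧ f 1 = 0

/-- The class 𝒞̆: convex members of 𝒞. -/
def MemCconv (f : ℝ → ℝ) : Prop := MemC f ∧ ConvexOn ℝ (Icc 0 1) f

/-- The class 𝒟: strictly decreasing members of 𝒞. -/
def MemD (f : ℝ → ℝ) : Prop := MemC f ∧ StrictAntiOn f (Icc 0 1)

/-- The class 𝒟̆ = 𝒟 ∩ 𝒞̆. -/
def MemDconv (f : ℝ → ℝ) : Prop := MemD f ∧ ConvexOn ℝ (Icc 0 1) f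

/-- The stride `σ g = sup {α ≥ 0 | α - x ≤ α * g x for all x ∈ [0,1]}`. -/
def stride (g : ℝ → ℝ) : ℝ :=
  sSup {α : ℝ | 0 ≤ α ∧ ∀ x ∈ Icc (0:ℝ) 1, α - x ≤ α * g x}

/-- The class 𝒦. -/
def MemK (g : ℝ → ℝ) : Prop :=
  MemCconv g ∧ 1/5 ≤ stride g ∧ 1/5 ≤ ∫ x in (0:ℝ)..1, g x

/-- `[c,d] ⊆ [0,ℓ]` is a sign switch of `Δ`. -/
def SignSwitch (Δ : ℝ → ℝ) (ℓ c d : ℝ) : Prop :=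
  0 < c ∧ c ≤ d ∧ d < ℓ ∧ (∀ x ∈ Icc c d, Δ x = 0) ∧
  ∃ δ : ℝ, 0 < δ ∧ δ ≤ min c (ℓ - d) ∧
    ∀ x : ℝ, 0 < x → x ≤ δ → Δ (c - x) * Δ (d + x) < 0

/-- `χΔ`: the number of sign switches of `Δ` on `[0,ℓ]`, in `ℕ∞`. -/
def nSwitch (Δ : ℝ → ℝ) (ℓ : ℝ) : ℕ∞ :=
  {p : ℝ × ℝ | SignSwitch Δ ℓ p.1 p.2}.encard

/-- The crossing number `χ(f,g) = sup {χ(f(a·) - b g) : a, b > 0}`. -/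
def crossNum (f g : ℝ → ℝ) : ℕ∞ :=
  ⨆ a ∈ Set.Ioi (0:ℝ), ⨆ b ∈ Set.Ioi (0:ℝ),
    nSwitch (fun x => f (a * x) - b * g x) (min 1 (1/a))

/-- `Dominates f g` means `f` dominates `g`, written `g ◁ f`. -/
def Dominates (f g : ℝ → ℝ) : Prop :=
  crossNum f g = 2 ∧ ∀ x ∈ Icc (0:ℝ) 1, g x ≤ f x


section Stmt7Aux

variable {g : ℝ → ℝ}

theorem stmt7_pInv_mem (hg0 : g 0 = 1) {y : ℝ} (hy : y ≤ 1) :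
    (0:ℝ) ∈ {x | x ∈ Icc (0:ℝ) 1 ∧ y ≤ g x} :=
  ⟨⟨le_refl 0, zero_le_one⟩, by rw [hg0]; exact hy⟩

theorem stmt7_pInv_bdd (y : ℝ) : BddAbove {x | x ∈ Icc (0:ℝ) 1 ∧ y ≤ g x} :=
  ⟨1, fun _ hx => hx.1.2⟩

theorem stmt7_pInv_nonneg (hg0 : g 0 = 1) {y : ℝ} (hy : y ≤ 1) : 0 ≤ pseudoInv g y :=
  le_csSup (stmt7_pInv_bdd y) (stmt7_pInv_mem hg0 hy)

theorem stmt7_pInv_le_one (hg0 : g 0 = 1) {y : ℝ} (hy : y ≤ 1) : pseudoInv g y ≤ 1 :=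
  csSup_le ⟨0, stmt7_pInv_mem hg0 hy⟩ (fun _ hx => hx.1.2)

theorem stmt7_pInv_anti (hg0 : g 0 = 1) : AntitoneOn (pseudoInv g) (Icc 0 1) := by
  intro y1 _ y2 h2 hle
  exact csSup_le_csSup (stmt7_pInv_bdd y1) ⟨0, stmt7_pInv_mem hg0 h2.2⟩
    (fun x hx => ⟨hx.1, hle.trans hx.2⟩)

theorem stmt7_chord (hg0 : g 0 = 1) (hg1 : g 1 = 0) (hconv : ConvexOn ℝ (Icc 0 1) g)
    {x : ℝ} (hx : x ∈ Icc (0:ℝ) 1) : g x ≤ 1 - x := by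
  have h := hconv.2 (left_mem_Icc.2 zero_le_one) (right_mem_Icc.2 zero_le_one)
    (sub_nonneg.2 hx.2) hx.1 (by ring)
  simp only [smul_eq_mul, mul_zero, mul_one, zero_add, hg0, hg1] at h
  linarith [h]

theorem stmt7_pInv_key (hmap : ∀ x ∈ Icc (0:ℝ) 1, g x ∈ Icc (0:ℝ) 1)
    (hg0 : g 0 = 1) (hg1 : g 1 = 0)
    (hconv : ConvexOn ℝ (Icc 0 1) g)
    {l y : ℝ} (hl : 0 < l) (hl1 : l ≤ 1) (hy : y ∈ Icc (0:ℝ) 1) :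
    pseudoInv g (1 - l + l * y) ≤ l * pseudoInv g y := by
  apply csSup_le ⟨0, stmt7_pInv_mem hg0 (by nlinarith [hy.2])⟩
  rintro x ⟨⟨hx0, hx1⟩, hgx⟩
  have hch : g x ≤ 1 - x := stmt7_chord hg0 hg1 hconv ⟨hx0, hx1⟩
  have hxl : x ≤ l := by nlinarith [hy.1]
  have hxlm : x / l ∈ Icc (0:ℝ) 1 :=
    ⟨div_nonneg hx0 hl.le, (div_le_one hl).2 hxl⟩
  have hc := hconv.2 (left_mem_Icc.2 zero_le_one) hxlm
    (sub_nonneg.2 hl1) hl.le (by ring)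
  have hx' : (1 - l) • (0:ℝ) + l • (x / l) = x := by
    simp only [smul_eq_mul, mul_zero, zero_add]
    field_simp
  rw [hx'] at hc
  simp only [smul_eq_mul, hg0, mul_one] at hc
  have hygl : y ≤ g (x / l) := by nlinarith [hc, hgx]
  have : x / l ≤ pseudoInv g y := le_csSup (stmt7_pInv_bdd y) ⟨hxlm, hygl⟩
  calc x = l * (x / l) := by field_simp
    _ ≤ l * pseudoInv g y := by nlinarith [this]

theorem stmt7_Fbound {h : ℝ → ℝ} (hA : AntitoneOn h (Icc 0 1))
    (hkey : ∀ {l y : ℝ}, 0 < l → l ≤ 1 → y ∈ Icc (0:ℝ) 1 →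
      h (1 - l + l * y) ≤ l * h y)
    {x : ℝ} (hx : x ∈ Icc (0:ℝ) 1) :
    (∫ y in x..1, h y) ≤ (1 - x)^2 * ∫ y in (0:ℝ)..1, h y := by
  rcases eq_or_lt_of_le hx.2 with h1 | hlt
  · subst h1; simp
  set l : ℝ := 1 - x with hldef
  have hl : 0 < l := by simp [hldef]; linarith
  have hl1 : l ≤ 1 := by simp [hldef]; linarith [hx.1]
  have hsub : (∫ y in (0:ℝ)..1, h (l * y + x)) = l⁻¹ • ∫ u in x..1, h u := by
    rw [intervalIntegral.integral_comp_mul_add h hl.ne' x,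
      show l * 0 + x = x by ring, show l * 1 + x = 1 by rw [hldef]; ring]
  have hint1 : IntervalIntegrable (fun y => h (l * y + x)) volume 0 1 := by
    apply AntitoneOn.intervalIntegrable
    rw [uIcc_of_le (zero_le_one : (0:ℝ) ≤ 1)]
    intro y1 hy1 y2 hy2 hle
    have m1 : l * y1 + x ∈ Icc (0:ℝ) 1 := by
      constructor <;> nlinarith [hy1.1, hy1.2, hx.1]
    have m2 : l * y2 + x ∈ Icc (0:ℝ) 1 := by
      constructor <;> nlinarith [hy2.1, hy2.2, hx.1]
    exact hA m1 m2 (by nlinarith)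
  have hint2 : IntervalIntegrable (fun y => l * h y) volume 0 1 := by
    apply IntervalIntegrable.const_mul
    apply AntitoneOn.intervalIntegrable
    rwa [uIcc_of_le (zero_le_one : (0:ℝ) ≤ 1)]
  have hmono : (∫ y in (0:ℝ)..1, h (l * y + x)) ≤ ∫ y in (0:ℝ)..1, l * h y := by
    apply intervalIntegral.integral_mono_on zero_le_one hint1 hint2
    intro y hy
    have := hkey hl hl1 hy
    rwa [show 1 - l + l * y = l * y + x by simp [hldef]; ring] at this
  have heq : (∫ u in x..1, h u) = l * ∫ y in (0:ℝ)..1, h (l * y + x) := by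
    rw [hsub, smul_eq_mul, ← mul_assoc, mul_inv_cancel₀ hl.ne', one_mul]
  have hmono' : (∫ y in (0:ℝ)..1, h (l * y + x)) ≤ l * ∫ y in (0:ℝ)..1, h y := by
    rwa [intervalIntegral.integral_const_mul] at hmono
  calc (∫ u in x..1, h u) = l * ∫ y in (0:ℝ)..1, h (l * y + x) := heq
    _ ≤ l * (l * ∫ y in (0:ℝ)..1, h y) := mul_le_mul_of_nonneg_left hmono' hl.le
    _ = (1 - x)^2 * ∫ y in (0:ℝ)..1, h y := by rw [hldef]; ring

theorem stmt7_area_le (hmap : ∀ x ∈ Icc (0:ℝ) 1, g x ∈ Icc (0:ℝ) 1)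
    (hanti : AntitoneOn g (Icc 0 1)) (hg0 : g 0 = 1)
    (hcont : ContinuousOn g (Icc 0 1))
    (hhint : IntervalIntegrable (pseudoInv g) volume 0 1) :
    (∫ y in (0:ℝ)..1, pseudoInv g y) ≤ ∫ t in (0:ℝ)..1, g t := by
  set h := pseudoInv g with hh
  set G : ℝ → ℝ := fun x => g (max 0 (min 1 x)) with hGdef
  have hclamp : ∀ x : ℝ, max 0 (min 1 x) ∈ Icc (0:ℝ) 1 := fun x =>
    ⟨le_max_left _ _, max_le zero_le_one (min_le_left _ _)⟩
  have hGcont : Continuous G :=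
    hcont.comp_continuous (continuous_const.max (continuous_const.min continuous_id)) hclamp
  have hGeq : ∀ x ∈ Icc (0:ℝ) 1, G x = g x := by
    intro x hx
    simp only [hGdef]
    rw [min_eq_right hx.2, max_eq_right hx.1]
  set S : Set (ℝ × ℝ) :=
    ((Prod.fst ⁻¹' Icc (0:ℝ) 1) ∩ (Prod.snd ⁻¹' Icc (0:ℝ) 1)) ∩ {p | p.2 ≤ G p.1} with hSdef
  have hS : MeasurableSet S :=
    ((measurableSet_Icc.preimage measurable_fst).inter
      (measurableSet_Icc.preimage measurable_snd)).inter
      (measurableSet_le measurable_snd (hGcont.measurable.comp measurable_fst))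
  have hslice1 : ∀ x : ℝ, volume (Prod.mk x ⁻¹' S)
      = (Icc (0:ℝ) 1).indicator (fun t => ENNReal.ofReal (g t)) x := by
    intro x
    by_cases hx : x ∈ Icc (0:ℝ) 1
    · have hset : Prod.mk x ⁻¹' S = Icc 0 (g x) := by
        ext y
        simp only [hSdef, mem_preimage, mem_inter_iff, mem_setOf_eq, mem_Icc, hGeq x hx]
        constructor
        · rintro ⟨⟨_, hy0, _⟩, hle⟩; exact ⟨hy0, hle⟩
        · rintro ⟨hy0, hle⟩
          exact ⟨⟨⟨hx.1, hx.2⟩, hy0, hle.trans (hmap x hx).2⟩, hle⟩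
      rw [hset, Real.volume_Icc, indicator_of_mem hx, sub_zero]
    · have hset : Prod.mk x ⁻¹' S = ∅ := by
        ext y
        simp only [hSdef, mem_preimage, mem_inter_iff, mem_setOf_eq, mem_empty_iff_false,
          iff_false]
        rintro ⟨⟨hx', _⟩, _⟩
        exact hx hx'
      rw [hset, indicator_of_notMem hx, measure_empty]
  have hslice2 : ∀ y : ℝ, (Icc (0:ℝ) 1).indicator (fun t => ENNReal.ofReal (h t)) y
      ≤ volume ((fun x => (x, y)) ⁻¹' S) := by
    intro y
    by_cases hy : y ∈ Icc (0:ℝ) 1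
    · rw [indicator_of_mem hy]
      have hsub : Ico (0:ℝ) (h y) ⊆ (fun x => (x, y)) ⁻¹' S := by
        intro x hx
        have hx1 : x ≤ 1 := hx.2.le.trans (stmt7_pInv_le_one hg0 hy.2)
        obtain ⟨a, ha, hxa⟩ :=
          exists_lt_of_lt_csSup ⟨0, stmt7_pInv_mem hg0 hy.2⟩ hx.2
        have hgx : y ≤ g x := by
          have := hanti ⟨hx.1, hxa.le.trans ha.1.2⟩ ha.1 hxa.le
          exact ha.2.trans this
        exact ⟨⟨⟨hx.1, hx1⟩, hy⟩, by simpa [hGeq x ⟨hx.1, hx1⟩] using hgx⟩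
      calc ENNReal.ofReal (h y) = volume (Ico (0:ℝ) (h y)) := by
            rw [Real.volume_Ico, sub_zero]
        _ ≤ _ := measure_mono hsub
    · rw [indicator_of_notMem hy]
      exact zero_le
  have e1 : (volume.prod volume) S = ∫⁻ x in Icc (0:ℝ) 1, ENNReal.ofReal (g x) := by
    rw [Measure.prod_apply hS, ← lintegral_indicator measurableSet_Icc _]
    exact lintegral_congr hslice1
  have e2 : (∫⁻ y in Icc (0:ℝ) 1, ENNReal.ofReal (h y)) ≤ (volume.prod volume) S := by
    rw [Measure.prod_apply_symm hS, ← lintegral_indicator measurableSet_Icc _]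
    exact lintegral_mono hslice2
  have hLD_lt : (∫⁻ x in Icc (0:ℝ) 1, ENNReal.ofReal (g x)) < ⊤ := by
    calc (∫⁻ x in Icc (0:ℝ) 1, ENNReal.ofReal (g x)) ≤ ∫⁻ _ in Icc (0:ℝ) 1, 1 := by
          apply setLIntegral_mono measurable_const
          intro x hx
          simpa using ENNReal.ofReal_le_one.2 (hmap x hx).2
      _ = volume (Icc (0:ℝ) 1) := by simp
      _ < ⊤ := by rw [Real.volume_Icc]; norm_num
  have hIntg : IntegrableOn g (Icc (0:ℝ) 1) := hcont.integrableOn_Icc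
  have cg : (∫ t in (0:ℝ)..1, g t)
      = (∫⁻ x in Icc (0:ℝ) 1, ENNReal.ofReal (g x)).toReal := by
    rw [integral_of_le zero_le_one, ← integral_Icc_eq_integral_Ioc,
      integral_eq_lintegral_of_nonneg_ae]
    · exact (ae_restrict_iff' measurableSet_Icc).2 (ae_of_all _ (fun x hx => (hmap x hx).1))
    · exact hIntg.aestronglyMeasurable
  have hInth : IntegrableOn h (Icc (0:ℝ) 1) := by
    rw [integrableOn_Icc_iff_integrableOn_Ioc]
    exact (intervalIntegrable_iff_integrableOn_Ioc_of_le zero_le_one).1 hhint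
  have ch : (∫ y in (0:ℝ)..1, h y)
      = (∫⁻ y in Icc (0:ℝ) 1, ENNReal.ofReal (h y)).toReal := by
    rw [integral_of_le zero_le_one, ← integral_Icc_eq_integral_Ioc,
      integral_eq_lintegral_of_nonneg_ae]
    · exact (ae_restrict_iff' measurableSet_Icc).2
        (ae_of_all _ (fun y hy => stmt7_pInv_nonneg hg0 hy.2))
    · exact hInth.aestronglyMeasurable
  rw [cg, ch]
  exact ENNReal.toReal_mono hLD_lt.ne (e2.trans (le_of_eq e1))

end Stmt7Aux

/-- for every convex `g ∈ 𝒞̆`, `∫₀¹ Tg ≤ 1/3`. -/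
theorem stmt7 (g : ℝ → ℝ) (hg : MemCconv g) :
    (∫ x in (0:ℝ)..1, Tmap g x) ≤ 1/3 := by
  obtain ⟨⟨⟨hmap, hanti, hg0, hpos⟩, hcont, hg1⟩, hconv⟩ := hg
  have hAnti : AntitoneOn (pseudoInv g) (Icc 0 1) := stmt7_pInv_anti hg0
  have hhint : IntervalIntegrable (pseudoInv g) volume 0 1 := by
    apply AntitoneOn.intervalIntegrable
    rwa [uIcc_of_le (zero_le_one : (0:ℝ) ≤ 1)]
  set A : ℝ := ∫ y in (0:ℝ)..1, pseudoInv g y with hA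
  set D : ℝ := ∫ t in (0:ℝ)..1, g t with hD
  have hDpos : 0 < D := hpos
  have hAD : A ≤ D := stmt7_area_le hmap hanti hg0 hcont hhint
  have hFb : ∀ x ∈ Icc (0:ℝ) 1, (∫ y in x..1, pseudoInv g y) ≤ (1-x)^2 * A :=
    fun x hx => stmt7_Fbound hAnti
      (fun hl hl1 hy => stmt7_pInv_key hmap hg0 hg1 hconv hl hl1 hy) hx
  have hIOn : IntegrableOn (pseudoInv g) (uIcc (0:ℝ) 1) := by
    rw [uIcc_of_le (zero_le_one : (0:ℝ) ≤ 1), integrableOn_Icc_iff_integrableOn_Ioc]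
    exact (intervalIntegrable_iff_integrableOn_Ioc_of_le zero_le_one).1 hhint
  have hFint : IntervalIntegrable (fun x => ∫ t in x..1, pseudoInv g t) volume 0 1 :=
    (continuousOn_primitive_interval_left hIOn).intervalIntegrable
  have hRint : IntervalIntegrable (fun x : ℝ => (1-x)^2 * A) volume 0 1 :=
    Continuous.intervalIntegrable (by continuity) 0 1
  have hFA : (∫ x in (0:ℝ)..1, ∫ y in x..1, pseudoInv g y) ≤ A/3 := by
    calc (∫ x in (0:ℝ)..1, ∫ y in x..1, pseudoInv g y)
        ≤ ∫ x in (0:ℝ)..1, (1-x)^2 * A :=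
          intervalIntegral.integral_mono_on zero_le_one hFint hRint hFb
      _ = (∫ x in (0:ℝ)..1, (1-x)^2) * A := intervalIntegral.integral_mul_const _ _
      _ = A/3 := by
          rw [show (∫ x in (0:ℝ)..1, (1-x)^2)
              = ∫ x in (0:ℝ)..1, ((fun u : ℝ => u^2) (1 - x)) from rfl,
            intervalIntegral.integral_comp_sub_left (fun u : ℝ => u^2) 1]
          norm_num [integral_pow]
          ring
  have hTg : (∫ x in (0:ℝ)..1, Tmap g x)
      = (∫ x in (0:ℝ)..1, ∫ y in x..1, pseudoInv g y) / D := by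
    simp only [Tmap, ← hD]
    exact intervalIntegral.integral_div _ _
  rw [hTg]
  calc (∫ x in (0:ℝ)..1, ∫ y in x..1, pseudoInv g y) / D ≤ (D/3) / D := by
        exact (div_le_div_iff_of_pos_right hDpos).2 (hFA.trans (by linarith))
    _ = 1/3 := by field_simp
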